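/- Let N ≥ 3 and let a : ℝ → (0,∞)^{2N} be a differentiable solution of the periodic Volterra lattice equations ȧ_j = a_j(a_{j+1} − a_{j−1}). Then the symmetric matrix L₂(a(t)) = Σ_{j=1}^{2N} √(a_j(t))·(E_{j,j+1} + E_{j+1,j}) and the antisymmetric matrix A₂(a(t)) = (1/2) Σ_{j=1}^{2N} √(a_j(t) a_{j+1}(t))·(E_{j,j+2} − E_{j+2,j}) satisfy the Lax equation d/dt L₂(a(t)) = A₂(a(t))·L₂(a(t)) − L₂(a(t))·A₂(a(t)) for all t. -/

import Mathlib

open Matrix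

instance neZeroTwoMul (N : ℕ) [NeZero N] : NeZero (2 * N) :=
  ⟨by have := NeZero.ne N; omega⟩

/-- `Emat N r s` is the `2N × 2N` real matrix with a `1` in position `(r, s)`
and zeros elsewhere, indices taken mod `2N`. -/
noncomputable def Emat (N : ℕ) [NeZero N] (r s : ZMod (2 * N)) :
    Matrix (ZMod (2 * N)) (ZMod (2 * N)) ℝ :=
  Matrix.single r s 1

/-- Moser's symmetric Lax matrix `L₂(a) = ∑ j, √(a j) • (E_{j,j+1} + E_{j+1,j})`. -/
noncomputable def LaxL2 (N : ℕ) [NeZero N] (a : ZMod (2 * N) → ℝ) :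
    Matrix (ZMod (2 * N)) (ZMod (2 * N)) ℝ :=
  ∑ j : ZMod (2 * N), Real.sqrt (a j) • (Emat N j (j + 1) + Emat N (j + 1) j)

/-- The antisymmetric companion matrix
`A₂(a) = (1/2) ∑ j, √(a j * a (j+1)) • (E_{j,j+2} - E_{j+2,j})`. -/
noncomputable def LaxA2 (N : ℕ) [NeZero N] (a : ZMod (2 * N) → ℝ) :
    Matrix (ZMod (2 * N)) (ZMod (2 * N)) ℝ :=
  (1 / 2 : ℝ) • ∑ j : ZMod (2 * N),
    Real.sqrt (a j * a (j + 1)) • (Emat N j (j + 2) - Emat N (j + 2) j)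

theorem L2_apply (N : ℕ) [NeZero N] (a : ZMod (2 * N) → ℝ) (i j : ZMod (2 * N)) :
    LaxL2 N a i j = (if j = i + 1 then Real.sqrt (a i) else 0)
      + (if j = i - 1 then Real.sqrt (a (i - 1)) else 0) := by
  have h2 : ∀ x : ZMod (2 * N), (x + 1 = j) = (x = j - 1) := by
    intro x; simp [eq_sub_iff_add_eq]
  have h3 : ∀ x : ZMod (2 * N), (x + 1 = i) = (x = i - 1) := by
    intro x; simp [eq_sub_iff_add_eq]
  simp only [LaxL2, Matrix.sum_apply, Matrix.smul_apply, Matrix.add_apply, Emat,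
    Matrix.single, Matrix.of_apply, smul_eq_mul, mul_add, mul_ite, mul_one, mul_zero,
    ite_and, h3]
  rw [Finset.sum_add_distrib]
  simp only [Finset.sum_ite_eq', Finset.mem_univ, if_true]
  congr 1
  · congr 1
    simp [eq_sub_iff_add_eq, eq_comm]
  · congr 1
    simp [eq_comm]

theorem A2_apply (N : ℕ) [NeZero N] (a : ZMod (2 * N) → ℝ) (i j : ZMod (2 * N)) :
    LaxA2 N a i j = (if j = i + 2 then Real.sqrt (a i * a (i+1)) / 2 else 0)
      - (if j = i - 2 then Real.sqrt (a (i-2) * a (i-1)) / 2 else 0) := by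
  have h3 : ∀ x : ZMod (2 * N), (x + 2 = i) = (x = i - 2) := by
    intro x; simp [eq_sub_iff_add_eq]
  simp only [LaxA2, Matrix.sum_apply, Matrix.smul_apply, Matrix.sub_apply, Emat,
    Matrix.single, Matrix.of_apply, smul_eq_mul, mul_sub, mul_ite, mul_one, mul_zero,
    ite_and, h3]
  rw [Finset.sum_sub_distrib]
  simp only [Finset.sum_ite_eq', Finset.mem_univ, if_true, smul_eq_mul, mul_sub]
  rw [show i - 2 + 1 = i - 1 from by ring]
  simp only [eq_comm (b := j)]
  split_ifs <;> ring

theorem key (N : ℕ) [NeZero N] (hN : 3 ≤ N) (b : ZMod (2 * N) → ℝ) (hb : ∀ m, 0 < b m)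
    (i j : ZMod (2 * N)) :
    (LaxA2 N b * LaxL2 N b - LaxL2 N b * LaxA2 N b) i j =
      (if j = i + 1 then Real.sqrt (b i) / 2 * (b (i + 1) - b (i - 1)) else 0)
      + (if j = i - 1 then Real.sqrt (b (i - 1)) / 2 * (b i - b (i - 2)) else 0) := by
  have hsm : ∀ x y : ZMod (2 * N), Real.sqrt (b x * b y) = Real.sqrt (b x) * Real.sqrt (b y) :=
    fun x y => Real.sqrt_mul (hb x).le _
  have c1 : ∀ x : ZMod (2 * N), (j = x + 1) = (x = j - 1) := by
    intro x; rw [eq_iff_iff]; constructor <;> intro h <;> linear_combination -h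
  have c2 : ∀ x : ZMod (2 * N), (j = x - 1) = (x = j + 1) := by
    intro x; rw [eq_iff_iff]; constructor <;> intro h <;> linear_combination -h
  have c3 : ∀ x : ZMod (2 * N), (j = x + 2) = (x = j - 2) := by
    intro x; rw [eq_iff_iff]; constructor <;> intro h <;> linear_combination -h
  have c4 : ∀ x : ZMod (2 * N), (j = x - 2) = (x = j + 2) := by
    intro x; rw [eq_iff_iff]; constructor <;> intro h <;> linear_combination -h
  simp only [Matrix.sub_apply, Matrix.mul_apply, A2_apply, L2_apply, sub_mul, mul_add, add_mul,
    mul_sub, ite_mul, mul_ite, zero_mul, mul_zero, c1, c2, c3, c4, Finset.sum_add_distrib,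
    Finset.sum_sub_distrib, Finset.sum_ite_eq', Finset.mem_univ, if_true, hsm]
  have d1 : (j - 1 = i + 2) = (j = i + 3) := by
    rw [eq_iff_iff]; constructor <;> intro h <;> linear_combination h
  have d2 : (j - 1 = i - 2) = (j = i - 1) := by
    rw [eq_iff_iff]; constructor <;> intro h <;> linear_combination h
  have d3 : (j + 1 = i + 2) = (j = i + 1) := by
    rw [eq_iff_iff]; constructor <;> intro h <;> linear_combination h
  have d4 : (j + 1 = i - 2) = (j = i - 3) := by
    rw [eq_iff_iff]; constructor <;> intro h <;> linear_combination h
  have d5 : (j - 2 = i + 1) = (j = i + 3) := by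
    rw [eq_iff_iff]; constructor <;> intro h <;> linear_combination h
  have d6 : (j - 2 = i - 1) = (j = i + 1) := by
    rw [eq_iff_iff]; constructor <;> intro h <;> linear_combination h
  have d7 : (j + 2 = i + 1) = (j = i - 1) := by
    rw [eq_iff_iff]; constructor <;> intro h <;> linear_combination h
  have d8 : (j + 2 = i - 1) = (j = i - 3) := by
    rw [eq_iff_iff]; constructor <;> intro h <;> linear_combination h
  simp only [d1, d2, d3, d4, d5, d6, d7, d8]
  have d9 : (i = j - 1) = (j = i + 1) := by
    rw [eq_iff_iff]; constructor <;> intro h <;> linear_combination -h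
  have d10 : (i = j + 1) = (j = i - 1) := by
    rw [eq_iff_iff]; constructor <;> intro h <;> linear_combination -h
  simp only [d9, d10]
  have hm : ∀ m, Real.sqrt (b m) * Real.sqrt (b m) = b m := fun m => Real.mul_self_sqrt (hb m).le
  have htwo : (2 : ZMod (2 * N)) ≠ 0 := by
    intro h
    have : (2 * N : ℕ) ∣ 2 := (ZMod.natCast_eq_zero_iff 2 (2 * N)).mp (by exact_mod_cast h)
    have := Nat.le_of_dvd (by norm_num) this
    omega
  have hfour : (4 : ZMod (2 * N)) ≠ 0 := by
    intro h
    have : (2 * N : ℕ) ∣ 4 := (ZMod.natCast_eq_zero_iff 4 (2 * N)).mp (by exact_mod_cast h)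
    have := Nat.le_of_dvd (by norm_num) this
    omega
  have k1 : ∀ x : ZMod (2 * N), x + 1 - 1 = x := fun x => by ring
  have k2 : ∀ x : ZMod (2 * N), x - 1 + 1 = x := fun x => by ring
  have k3 : ∀ x : ZMod (2 * N), x + 1 - 2 = x - 1 := fun x => by ring
  have k5 : ∀ x : ZMod (2 * N), x + 3 - 1 = x + 2 := fun x => by ring
  have k6 : ∀ x : ZMod (2 * N), x + 3 - 2 = x + 1 := fun x => by ring
  have k7 : ∀ x : ZMod (2 * N), x + 2 - 2 = x := fun x => by ring
  have k8 : ∀ x : ZMod (2 * N), x + 2 - 1 = x + 1 := fun x => by ring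
  have k9 : ∀ x : ZMod (2 * N), x - 3 + 1 = x - 2 := fun x => by ring
  have k11 : ∀ x : ZMod (2 * N), x - 1 - 1 = x - 2 := fun x => by ring
  have k14 : ∀ x : ZMod (2 * N), x + 1 + 1 = x + 2 := fun x => by ring
  have k16 : ∀ x : ZMod (2 * N), x + 3 + 1 = x + 4 := fun x => by ring
  have k17 : ∀ x : ZMod (2 * N), x - 3 - 1 = x - 4 := fun x => by ring
  have k18 : ∀ x : ZMod (2 * N), x - 3 - 2 = x - 5 := fun x => by ring
  have k19 : ∀ x : ZMod (2 * N), x - 5 + 1 = x - 4 := fun x => by ring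
  have k4 : ∀ x : ZMod (2 * N), x - 2 + 1 = x - 1 := fun x => by ring
  have k20 : ∀ x : ZMod (2 * N), x - 2 - 1 = x - 3 := fun x => by ring
  have k21 : ∀ x : ZMod (2 * N), x - 4 + 1 = x - 3 := fun x => by ring
  have k22 : ∀ x : ZMod (2 * N), x + 4 - 1 = x + 3 := fun x => by ring
  have k23 : ∀ x : ZMod (2 * N), x - 2 - 2 = x - 4 := fun x => by ring
  have k24 : ∀ x : ZMod (2 * N), x + 2 + 1 = x + 3 := fun x => by ring
  have k25 : ∀ x : ZMod (2 * N), x - 2 + 2 = x := fun x => by ring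
  have k26 : ∀ x : ZMod (2 * N), x + 2 - 3 = x - 1 := fun x => by ring
  split_ifs
  all_goals first
    | ring1
    | exact absurd (show (4 : ZMod (2 * N)) = 0 from by linear_combination ‹j = i - 1› - ‹j = i + 3›) hfour
    | exact absurd (show (2 : ZMod (2 * N)) = 0 from by linear_combination ‹j = i + 1› - ‹j = i + 3›) htwo
    | exact absurd (show (2 : ZMod (2 * N)) = 0 from by linear_combination ‹j = i - 1› - ‹j = i + 1›) htwo
    | exact absurd (show (2 : ZMod (2 * N)) = 0 from by linear_combination ‹j = i - 3› - ‹j = i - 1›) htwo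
    | exact absurd (show (4 : ZMod (2 * N)) = 0 from by linear_combination ‹j = i - 3› - ‹j = i + 1›) hfour
    | (subst_vars; simp only [k1, k2, k3, k5, k6, k7, k8, k9, k11, k14, k4, k20, k21, k22, k23, k24, k25, k26]; ring1)
    | (subst_vars
       have e6 : (6 : ZMod (2 * N)) = 0 := by
         first
         | linear_combination (‹i + 3 = i - 3› : i + 3 = i - 3)
         | linear_combination -(‹i - 3 = i + 3› : i - 3 = i + 3)
       simp only [k1, k2, k3, k5, k6, k7, k8, k9, k11, k14, k16, k17, k18, k19, k4, k20, k21, k22, k23, k24, k25, k26,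
         show i + 4 = i - 2 from by linear_combination e6,
         show i - 2 - 1 = i + 3 from by linear_combination -e6,
         show i - 3 = i + 3 from by linear_combination -e6,
         show i - 4 = i + 2 from by linear_combination -e6,
         show i - 5 = i + 1 from by linear_combination -e6]
       ring1)
    | (subst_vars; simp only [k1, k2, k3, k5, k6, k7, k8, k9, k11, k14, k4, k20, k21, k22, k23, k24, k25, k26];
        linear_combination (Real.sqrt (b i) / 2) * hm (i + 1) - (Real.sqrt (b i) / 2) * hm (i - 1))
    | (subst_vars; simp only [k1, k2, k3, k5, k6, k7, k8, k9, k11, k14, k4, k20, k21, k22, k23, k24, k25, k26];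
        linear_combination (Real.sqrt (b (i - 1)) / 2) * hm i - (Real.sqrt (b (i - 1)) / 2) * hm (i - 2))

/-- For a differentiable positive solution of the periodic Volterra lattice, the
pair `(L₂, A₂)` satisfies the Lax equation `d/dt L₂(a(t)) = [A₂(a(t)), L₂(a(t))]`. -/
theorem volterra_lax_symmetric (N : ℕ) [NeZero N] (hN : 3 ≤ N)
    (a : ℝ → ZMod (2 * N) → ℝ)
    (hpos : ∀ t j, 0 < a t j)
    (hdiff : ∀ j, Differentiable ℝ fun t => a t j)
    (hvolt : ∀ t j, HasDerivAt (fun s => a s j) (a t j * (a t (j + 1) - a t (j - 1))) t) :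
    ∀ t i j, HasDerivAt (fun s => LaxL2 N (a s) i j)
      ((LaxA2 N (a t) * LaxL2 N (a t) - LaxL2 N (a t) * LaxA2 N (a t)) i j) t := by
  intro t i j
  have hsd : ∀ m : ZMod (2 * N), HasDerivAt (fun s => Real.sqrt (a s m))
      (Real.sqrt (a t m) / 2 * (a t (m + 1) - a t (m - 1))) t := by
    intro m
    have h := (Real.hasDerivAt_sqrt (ne_of_gt (hpos t m))).comp t (hvolt t m)
    refine h.congr_deriv ?_
    have hs : Real.sqrt (a t m) ≠ 0 := ne_of_gt (Real.sqrt_pos.mpr (hpos t m))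
    have hm : Real.sqrt (a t m) * Real.sqrt (a t m) = a t m := Real.mul_self_sqrt (hpos t m).le
    field_simp
    linear_combination (-(a t (m + 1) - a t (m - 1))) * hm
  have htwo : (2 : ZMod (2 * N)) ≠ 0 := by
    intro h
    have : (2 * N : ℕ) ∣ 2 := (ZMod.natCast_eq_zero_iff 2 (2 * N)).mp (by exact_mod_cast h)
    have := Nat.le_of_dvd (by norm_num) this
    omega
  rw [key N hN (a t) (hpos t) i j]
  have hL : ∀ s, LaxL2 N (a s) i j = (if j = i + 1 then Real.sqrt (a s i) else 0)
      + (if j = i - 1 then Real.sqrt (a s (i - 1)) else 0) := fun s => L2_apply N (a s) i j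
  simp only [hL]
  by_cases h1 : j = i + 1 <;> by_cases h2 : j = i - 1
  · exact absurd (show (2 : ZMod (2 * N)) = 0 from by linear_combination h2 - h1) htwo
  · simp only [if_pos h1, if_neg h2, add_zero]
    exact hsd i
  · simp only [if_neg h1, if_pos h2, zero_add]
    have h := hsd (i - 1)
    rwa [show i - 1 + 1 = i from by ring, show i - 1 - 1 = i - 2 from by ring] at h
  · simp only [if_neg h1, if_neg h2, add_zero]
    exact hasDerivAt_const t 0
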